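/- Let k : ℝ⁴ → ℝ be any smooth function and let {f,g} = k·(x₁(∂₂f·∂₃g − ∂₃f·∂₂g) + x₂(∂₁f·∂₃g − ∂₃f·∂₁g) − x₃(∂₁f·∂₂g − ∂₂f·∂₁g)) on ℝ⁴ with coordinates (θ,x₁,x₂,x₃). Then the functions Q¹(θ,x₁,x₂,x₃) = θ and Q²(θ,x₁,x₂,x₃) = −x₁² + x₂² + x₃² are Casimirs: {Q¹, g} = 0 and {Q², g} = 0 for every smooth g : ℝ⁴ → ℝ. -/

import Mathlib

/-- Partial derivative of `f : ℝ⁴ → ℝ` in the `i`-th coordinate direction;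
index `0` is θ and indices `1,2,3` are x₁,x₂,x₃. -/
noncomputable def pd (i : Fin 4) (f : (Fin 4 → ℝ) → ℝ) (x : Fin 4 → ℝ) : ℝ :=
  fderiv ℝ f x (Pi.single i 1)

/-- The broken-Lefschetz-fibration fold-circle bracket with conformal factor `k`. -/
noncomputable def foldBracket (k : (Fin 4 → ℝ) → ℝ)
    (f g : (Fin 4 → ℝ) → ℝ) : (Fin 4 → ℝ) → ℝ :=
  fun x =>
    k x * (x 1 * (pd 2 f x * pd 3 g x - pd 3 f x * pd 2 g x)
      + x 2 * (pd 1 f x * pd 3 g x - pd 3 f x * pd 1 g x)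
      - x 3 * (pd 1 f x * pd 2 g x - pd 2 f x * pd 1 g x))

lemma hasFDerivAt_proj (j : Fin 4) (x : Fin 4 → ℝ) :
    HasFDerivAt (fun y : Fin 4 → ℝ => y j)
      (ContinuousLinearMap.proj (R := ℝ) (φ := fun _ : Fin 4 => ℝ) j) x :=
  hasFDerivAt_apply j x

lemma pd_proj (i j : Fin 4) (x : Fin 4 → ℝ) :
    pd i (fun y => y j) x = (Pi.single i 1 : Fin 4 → ℝ) j := by
  simp [pd, (hasFDerivAt_proj j x).fderiv]

lemma pd_Q2 (i : Fin 4) (x : Fin 4 → ℝ) :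
    pd i (fun y => -(y 1) ^ 2 + (y 2) ^ 2 + (y 3) ^ 2) x =
      -(2 * x 1 * (Pi.single i 1 : Fin 4 → ℝ) 1)
        + 2 * x 2 * (Pi.single i 1 : Fin 4 → ℝ) 2
        + 2 * x 3 * (Pi.single i 1 : Fin 4 → ℝ) 3 := by
  have hf : (fun y : Fin 4 → ℝ => -(y 1) ^ 2 + (y 2) ^ 2 + (y 3) ^ 2)
      = fun y => -(y 1 * y 1) + y 2 * y 2 + y 3 * y 3 := by
    funext y; ring
  have h1 := ((hasFDerivAt_proj 1 x).mul (hasFDerivAt_proj 1 x)).neg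
  have h2 := (hasFDerivAt_proj 2 x).mul (hasFDerivAt_proj 2 x)
  have h3 := (hasFDerivAt_proj 3 x).mul (hasFDerivAt_proj 3 x)
  have h : HasFDerivAt (fun y : Fin 4 → ℝ => -(y 1 * y 1) + y 2 * y 2 + y 3 * y 3) _ x :=
    (h1.add h2).add h3
  rw [pd, hf, h.fderiv]
  simp
  ring

/-- `Q¹ = θ` and `Q² = −x₁² + x₂² + x₃²` are Casimir functions of the
fold-circle bracket. -/
theorem foldBracket_casimirs (k : (Fin 4 → ℝ) → ℝ) (hk : ContDiff ℝ (⊤ : ℕ∞) k)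
    (g : (Fin 4 → ℝ) → ℝ) (hg : ContDiff ℝ (⊤ : ℕ∞) g) (x : Fin 4 → ℝ) :
    foldBracket k (fun y => y 0) g x = 0
    ∧ foldBracket k (fun y => -(y 1) ^ 2 + (y 2) ^ 2 + (y 3) ^ 2) g x = 0 := by
  constructor
  · simp [foldBracket, pd_proj]
  · simp only [foldBracket, pd_Q2]
    simp only [Pi.single_eq_same, Pi.single_eq_of_ne (by decide : (1:Fin 4) ≠ 2),
      Pi.single_eq_of_ne (by decide : (1:Fin 4) ≠ 3),
      Pi.single_eq_of_ne (by decide : (2:Fin 4) ≠ 1),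
      Pi.single_eq_of_ne (by decide : (2:Fin 4) ≠ 3),
      Pi.single_eq_of_ne (by decide : (3:Fin 4) ≠ 1),
      Pi.single_eq_of_ne (by decide : (3:Fin 4) ≠ 2)]
    ring
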